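/- arXiv:2501.07519 — 3 statements merged into one kernel-verified Lean document; each statement's English description precedes it below -/
import Mathlib

section
/- Let P be a finite poset and k a field of characteristic 0. For every n ≥ 1 the map Φ : C^n(P;k) → C^n(kP,S;kP) is a well-defined k-linear bijection from simplicial n-cochains on P onto S-relative Hochschild n-cochains of the incidence algebra kP; for n = 0, the map f ↦ Φf (the diagonal element with (Φf)(i,i) = f(i)) is a k-linear bijection from C^0(P;k) onto the centralizer {a ∈ kP | a·b = b·a for all b ∈ S}. -/
/-!
STATEMENT 3: For a finite poset `P`, the map `Φ` is a well-defined `k`-linear bijection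
from simplicial `n`-cochains on `P` onto `S`-relative Hochschild `n`-cochains of the
incidence algebra `kP` (for `n ≥ 1`), and for `n = 0` a `k`-linear bijection onto the
centralizer of `S` in `kP`.
-/

open Finset

section Hochschild
variable (k : Type*) [Field k] {A : Type*} [Ring A] [Algebra k A]

/-- `f : A^n → A` is `k`-multilinear. -/
def IsMultilin (n : ℕ) (f : (Fin n → A) → A) : Prop :=
  ∀ (a : Fin n → A) (i : Fin n) (c : k) (x y : A),
    f (Function.update a i (c • x + y)) =
      c • f (Function.update a i x) + f (Function.update a i y)

/-- `f : A^n → A` is an `S`-relative Hochschild `n`-cochain. -/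
def IsRelCochain (S : Set A) (n : ℕ) (f : (Fin n → A) → A) : Prop :=
  IsMultilin k n f ∧
  ∀ b ∈ S, ∀ a : Fin n → A,
    (∀ h0 : 0 < n, f (Function.update a ⟨0, h0⟩ (b * a ⟨0, h0⟩)) = b * f a) ∧
    (∀ (t : ℕ) (ht : t + 1 < n),
      f (Function.update a ⟨t, by omega⟩ (a ⟨t, by omega⟩ * b)) =
        f (Function.update a ⟨t + 1, ht⟩ (b * a ⟨t + 1, ht⟩))) ∧
    (∀ h0 : 0 < n, f (Function.update a ⟨n - 1, by omega⟩ (a ⟨n - 1, by omega⟩ * b)) = f a * b)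

end Hochschild

section Incidence
variable (k : Type*) [Field k] (P : Type*) [PartialOrder P] [LocallyFiniteOrder P]
  [DecidableEq P]

/-- A chain (simplex) of length `n` in the poset `P`: a monotone `(n+1)`-tuple. -/
abbrev SChain (n : ℕ) := {c : Fin (n + 1) → P // Monotone c}

open scoped Classical in
/-- The finset of monotone `(n+1)`-tuples from `x` to `y`. -/
noncomputable def chainTuples (n : ℕ) (x y : P) : Finset (Fin (n + 1) → P) :=
  (Fintype.piFinset fun _ => Finset.Icc x y).filter fun c =>
    Monotone c ∧ c 0 = x ∧ c (Fin.last n) = y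

lemma chainTuples_mono {n : ℕ} {x y : P} {c : Fin (n + 1) → P}
    (hc : c ∈ chainTuples P n x y) : Monotone c := by
  classical
  simp only [chainTuples, Finset.mem_filter] at hc
  exact hc.2.1

lemma le_of_mem_chainTuples {n : ℕ} {x y : P} {c : Fin (n + 1) → P}
    (hc : c ∈ chainTuples P n x y) : x ≤ y := by
  classical
  simp only [chainTuples, Finset.mem_filter] at hc
  exact hc.2.2.1 ▸ hc.2.2.2 ▸ hc.2.1 (Fin.zero_le _)

/-- The map `Φ` from simplicial `n`-cochains on `P` to Hochschild `n`-cochains of `kP`: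
`(Φf)(a_1, …, a_n)(x, y) = ∑_{x = i₀ ≤ ⋯ ≤ iₙ = y} f(i₀, …, iₙ)·a_1(i₀,i₁)⋯aₙ(i_{n-1},iₙ)`. -/
noncomputable def Phi (n : ℕ) (f : SChain P n → k) (a : Fin n → IncidenceAlgebra k P) :
    IncidenceAlgebra k P :=
  ⟨fun x y => ∑ c ∈ (chainTuples P n x y).attach,
      f ⟨c.1, chainTuples_mono P c.2⟩ * ∏ t : Fin n, a t (c.1 t.castSucc) (c.1 t.succ),
   fun x y hxy => by
    try dsimp only
    exact Finset.sum_eq_zero fun c _ => absurd (le_of_mem_chainTuples P c.2) hxy⟩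

/-- The subalgebra `S ⊆ kP` of elements supported on the diagonal. -/
def diagSub : Subalgebra k (IncidenceAlgebra k P) where
  carrier := {a | ∀ i j : P, i ≠ j → a i j = 0}
  add_mem' := fun {a} {b} ha hb i j hij => by
    rw [IncidenceAlgebra.add_apply, ha i j hij, hb i j hij, add_zero]
  mul_mem' := fun {a} {b} ha hb i j hij => by
    rw [IncidenceAlgebra.mul_apply]
    refine Finset.sum_eq_zero fun m _ => ?_
    rcases eq_or_ne i m with rfl | him
    · rw [hb _ _ hij, mul_zero]
    · rw [ha _ _ him, zero_mul]
  algebraMap_mem' := fun c i j hij => by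
    rw [Algebra.algebraMap_eq_smul_one]
    show c • ((1 : IncidenceAlgebra k P) i j) = 0
    rw [IncidenceAlgebra.one_apply, if_neg hij, smul_zero]

end Incidence

open IncidenceAlgebra

section Aux1
open scoped Classical
open IncidenceAlgebra
set_option linter.unusedSectionVars false
variable (k : Type*) [Field k] (P : Type*) [PartialOrder P] [LocallyFiniteOrder P]
  [DecidableEq P]

/-- The "matrix unit" `E^{ij}` of the incidence algebra. -/
noncomputable def eE (i j : P) : IncidenceAlgebra k P :=
  ⟨fun x y => if x = i ∧ y = j ∧ i ≤ j then (1 : k) else 0, by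
    intro x y h
    split_ifs with hc
    · exact absurd (hc.1 ▸ hc.2.1 ▸ hc.2.2) h
    · rfl⟩

lemma eE_apply (i j x y : P) :
    eE k P i j x y = if x = i ∧ y = j ∧ i ≤ j then (1 : k) else 0 := rfl

variable {k P}

lemma mem_diagSub {b : IncidenceAlgebra k P} :
    b ∈ (diagSub k P : Set (IncidenceAlgebra k P)) ↔ ∀ i j : P, i ≠ j → b i j = 0 :=
  Iff.rfl

lemma eE_diag_mem (i : P) : eE k P i i ∈ (diagSub k P : Set (IncidenceAlgebra k P)) := by
  intro x y hxy
  rw [eE_apply, if_neg]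
  rintro ⟨rfl, rfl, -⟩
  exact hxy rfl

lemma diag_mul_apply {b : IncidenceAlgebra k P} (hb : ∀ i j : P, i ≠ j → b i j = 0)
    (a : IncidenceAlgebra k P) (x y : P) : (b * a) x y = b x x * a x y := by
  rw [IncidenceAlgebra.mul_apply]
  by_cases hxy : x ≤ y
  · rw [Finset.sum_eq_single_of_mem x (Finset.mem_Icc.2 ⟨le_refl x, hxy⟩)]
    intro m _ hm
    rw [hb x m (Ne.symm hm), zero_mul]
  · rw [Finset.Icc_eq_empty hxy, Finset.sum_empty,
      IncidenceAlgebra.apply_eq_zero_of_not_le hxy a, mul_zero]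

lemma mul_diag_apply {b : IncidenceAlgebra k P} (hb : ∀ i j : P, i ≠ j → b i j = 0)
    (a : IncidenceAlgebra k P) (x y : P) : (a * b) x y = a x y * b y y := by
  rw [IncidenceAlgebra.mul_apply]
  by_cases hxy : x ≤ y
  · rw [Finset.sum_eq_single_of_mem y (Finset.mem_Icc.2 ⟨hxy, le_refl y⟩)]
    intro m _ hm
    rw [hb m y hm, mul_zero]
  · rw [Finset.Icc_eq_empty hxy, Finset.sum_empty,
      IncidenceAlgebra.apply_eq_zero_of_not_le hxy a, zero_mul]

lemma mem_chainTuples_iff {n : ℕ} {x y : P} {c : Fin (n + 1) → P} :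
    c ∈ chainTuples P n x y ↔ Monotone c ∧ c 0 = x ∧ c (Fin.last n) = y := by
  classical
  simp only [chainTuples, Finset.mem_filter, Fintype.mem_piFinset, Finset.mem_Icc]
  constructor
  · rintro ⟨-, h⟩; exact h
  · rintro ⟨hm, h0, hl⟩
    exact ⟨fun t => ⟨h0 ▸ hm (Fin.zero_le t), hl ▸ hm (Fin.le_last t)⟩, hm, h0, hl⟩

variable (k) in
/-- Extension of a simplicial cochain to all tuples. -/
noncomputable def fext {n : ℕ} (f : SChain P n → k) (c : Fin (n + 1) → P) : k :=
  if h : Monotone c then f ⟨c, h⟩ else 0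

lemma fext_apply {n : ℕ} (f : SChain P n → k) (c : Fin (n + 1) → P) (h : Monotone c) :
    fext k f c = f ⟨c, h⟩ := dif_pos h

lemma Phi_apply {n : ℕ} (f : SChain P n → k) (a : Fin n → IncidenceAlgebra k P) (x y : P) :
    Phi k P n f a x y =
      ∑ c ∈ chainTuples P n x y,
        fext k f c * ∏ t : Fin n, a t (c t.castSucc) (c t.succ) := by
  rw [← Finset.sum_attach (chainTuples P n x y)
    (fun c => fext k f c * ∏ t : Fin n, a t (c t.castSucc) (c t.succ))]
  show ∑ c ∈ (chainTuples P n x y).attach, _ = _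
  refine Finset.sum_congr rfl fun c _ => ?_
  rw [fext_apply f c.1 (chainTuples_mono P c.2)]

end Aux1
section Aux2
open scoped Classical
open IncidenceAlgebra
set_option linter.unusedSectionVars false
variable {k : Type*} [Field k] {P : Type*} [PartialOrder P] [LocallyFiniteOrder P]
  [DecidableEq P]

lemma update_entry {n : ℕ} (a : Fin n → IncidenceAlgebra k P) (i : Fin n)
    (v : IncidenceAlgebra k P) (c : Fin (n + 1) → P) (t : Fin n) :
    (Function.update a i v) t (c t.castSucc) (c t.succ) =
      Function.update (fun s => a s (c s.castSucc) (c s.succ)) i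
        (v (c i.castSucc) (c i.succ)) t := by
  by_cases h : t = i
  · subst h; simp
  · simp [Function.update_of_ne h]

lemma prod_update_entry {n : ℕ} (a : Fin n → IncidenceAlgebra k P) (i : Fin n)
    (v : IncidenceAlgebra k P) (c : Fin (n + 1) → P) :
    ∏ t : Fin n, (Function.update a i v) t (c t.castSucc) (c t.succ) =
      v (c i.castSucc) (c i.succ) *
        ∏ t ∈ Finset.univ.erase i, a t (c t.castSucc) (c t.succ) := by
  rw [Finset.prod_congr rfl fun t _ => update_entry a i v c t,
    Finset.prod_update_of_mem (Finset.mem_univ i)]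
  congr 1
  exact Finset.prod_congr (Finset.sdiff_singleton_eq_erase i Finset.univ) fun _ _ => rfl

lemma prod_entry_erase {n : ℕ} (a : Fin n → IncidenceAlgebra k P) (i : Fin n)
    (c : Fin (n + 1) → P) :
    a i (c i.castSucc) (c i.succ) * ∏ t ∈ Finset.univ.erase i, a t (c t.castSucc) (c t.succ) =
      ∏ t : Fin n, a t (c t.castSucc) (c t.succ) :=
  Finset.mul_prod_erase Finset.univ (fun t => a t (c t.castSucc) (c t.succ)) (Finset.mem_univ i)

lemma Phi_isMultilin (n : ℕ) (f : SChain P n → k) : IsMultilin k n (Phi k P n f) := by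
  intro a i c x y
  ext u v huv
  rw [IncidenceAlgebra.add_apply, constSMul_apply, smul_eq_mul, Phi_apply, Phi_apply, Phi_apply,
    Finset.mul_sum, ← Finset.sum_add_distrib]
  refine Finset.sum_congr rfl fun d _ => ?_
  rw [prod_update_entry, prod_update_entry, prod_update_entry, IncidenceAlgebra.add_apply, constSMul_apply,
    smul_eq_mul]
  ring

lemma Phi_rel_left {n : ℕ} (f : SChain P n → k) {b : IncidenceAlgebra k P}
    (hb : ∀ i j : P, i ≠ j → b i j = 0) (a : Fin n → IncidenceAlgebra k P) (h0 : 0 < n) :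
    Phi k P n f (Function.update a ⟨0, h0⟩ (b * a ⟨0, h0⟩)) = b * Phi k P n f a := by
  ext u v huv
  rw [diag_mul_apply hb, Phi_apply, Phi_apply, Finset.mul_sum]
  refine Finset.sum_congr rfl fun d hd => ?_
  have e0 : (Fin.castSucc ⟨0, h0⟩ : Fin (n + 1)) = 0 := by ext; simp
  have hd0 : d (Fin.castSucc ⟨0, h0⟩) = u := by
    rw [e0]; exact (mem_chainTuples_iff.1 hd).2.1
  rw [prod_update_entry, diag_mul_apply hb, hd0, ← prod_entry_erase a ⟨0, h0⟩ d, hd0]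
  ring

lemma Phi_rel_right {n : ℕ} (f : SChain P n → k) {b : IncidenceAlgebra k P}
    (hb : ∀ i j : P, i ≠ j → b i j = 0) (a : Fin n → IncidenceAlgebra k P) (h0 : 0 < n)
    (hn : n - 1 < n) :
    Phi k P n f (Function.update a ⟨n - 1, hn⟩ (a ⟨n - 1, hn⟩ * b)) = Phi k P n f a * b := by
  ext u v huv
  rw [mul_diag_apply hb, Phi_apply, Phi_apply, Finset.sum_mul]
  refine Finset.sum_congr rfl fun d hd => ?_
  have e0 : (Fin.succ ⟨n - 1, hn⟩ : Fin (n + 1)) = Fin.last n := by ext; simp; omega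
  have hd0 : d (Fin.succ ⟨n - 1, hn⟩) = v := by
    rw [e0]; exact (mem_chainTuples_iff.1 hd).2.2
  rw [prod_update_entry, mul_diag_apply hb, hd0, ← prod_entry_erase a ⟨n - 1, hn⟩ d, hd0]
  ring

lemma Phi_rel_mid {n : ℕ} (f : SChain P n → k) {b : IncidenceAlgebra k P}
    (hb : ∀ i j : P, i ≠ j → b i j = 0) (a : Fin n → IncidenceAlgebra k P) (t : ℕ)
    (ht : t + 1 < n) (h : t < n) :
    Phi k P n f (Function.update a ⟨t, h⟩ (a ⟨t, h⟩ * b)) =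
      Phi k P n f (Function.update a ⟨t + 1, ht⟩ (b * a ⟨t + 1, ht⟩)) := by
  ext u v huv
  rw [Phi_apply, Phi_apply]
  refine Finset.sum_congr rfl fun d _ => ?_
  have e0 : (Fin.castSucc ⟨t + 1, ht⟩ : Fin (n + 1)) = Fin.succ ⟨t, h⟩ := by ext; simp
  rw [prod_update_entry, prod_update_entry, mul_diag_apply hb, diag_mul_apply hb, e0]
  have h1 := prod_entry_erase a ⟨t, h⟩ d
  have h2 := prod_entry_erase a ⟨t + 1, ht⟩ d
  rw [e0] at h2
  refine Eq.trans (b := b (d (Fin.succ ⟨t, h⟩)) (d (Fin.succ ⟨t, h⟩)) *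
    (fext k f d * ∏ s : Fin n, a s (d s.castSucc) (d s.succ))) ?_ ?_
  · rw [← h1]; ring
  · rw [← h2]; ring

end Aux2
section Aux3
variable {k : Type*} [Field k] {A : Type*} [Ring A] [Algebra k A] {n : ℕ}
  {F : (Fin n → A) → A}

lemma IsMultilin.update_zero (hF : IsMultilin k n F) (a : Fin n → A) (i : Fin n) :
    F (Function.update a i 0) = 0 := by
  have h := hF a i 1 0 0
  rw [smul_zero, add_zero, one_smul] at h
  exact left_eq_add.mp h

lemma IsMultilin.coord_zero (hF : IsMultilin k n F) {a : Fin n → A} (i : Fin n)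
    (h : a i = 0) : F a = 0 := by
  have ha : Function.update a i 0 = a := by rw [← h, Function.update_eq_self]
  rw [← ha]
  exact hF.update_zero a i

lemma IsMultilin.update_add (hF : IsMultilin k n F) (a : Fin n → A) (i : Fin n) (x y : A) :
    F (Function.update a i (x + y)) =
      F (Function.update a i x) + F (Function.update a i y) := by
  have h := hF a i 1 x y
  rwa [one_smul, one_smul] at h

lemma IsMultilin.update_smul (hF : IsMultilin k n F) (a : Fin n → A) (i : Fin n) (c : k) (x : A) :
    F (Function.update a i (c • x)) = c • F (Function.update a i x) := by
  have h := hF a i c x 0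
  rwa [add_zero, hF.update_zero, add_zero] at h

/-- Package an `IsMultilin` function as a `MultilinearMap`. -/
def IsMultilin.toML (hF : IsMultilin k n F) : MultilinearMap k (fun _ : Fin n => A) A where
  toFun := F
  map_update_add' := by
    intro inst a i x y
    have : inst = instDecidableEqFin n := Subsingleton.elim _ _
    subst this
    exact hF.update_add a i x y
  map_update_smul' := by
    intro inst a i c x
    have : inst = instDecidableEqFin n := Subsingleton.elim _ _
    subst this
    exact hF.update_smul a i c x

lemma IsMultilin.toML_apply (hF : IsMultilin k n F) (a : Fin n → A) : hF.toML a = F a := rfl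

end Aux3
section Aux4
open scoped Classical
open IncidenceAlgebra
set_option linter.unusedSectionVars false
variable {k : Type*} [Field k] {P : Type*} [PartialOrder P] [LocallyFiniteOrder P]
  [DecidableEq P]

lemma eE_mul_diag (i j : P) : eE k P i j * eE k P j j = eE k P i j := by
  ext x y hxy
  rw [mul_diag_apply (eE_diag_mem j)]
  simp only [eE_apply]
  by_cases h : x = i ∧ y = j ∧ i ≤ j
  · rcases h with ⟨rfl, rfl, hij⟩
    simp [hij]
  · rw [if_neg h, zero_mul]

lemma diag_mul_eE (i j : P) : eE k P i i * eE k P i j = eE k P i j := by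
  ext x y hxy
  rw [diag_mul_apply (eE_diag_mem i)]
  simp only [eE_apply]
  by_cases h : x = i ∧ y = j ∧ i ≤ j
  · rcases h with ⟨rfl, rfl, hij⟩
    simp [hij]
  · rw [if_neg h, mul_zero]

lemma diag_mul_eE_ne {q p : P} (h : q ≠ p) (j : P) : eE k P q q * eE k P p j = 0 := by
  ext x y hxy
  rw [diag_mul_apply (eE_diag_mem q), IncidenceAlgebra.zero_apply]
  simp only [eE_apply]
  by_cases hx : x = p
  · subst hx
    rw [if_neg (fun hh : x = q ∧ x = q ∧ q ≤ q => h hh.1.symm), zero_mul]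
  · rw [if_neg (fun hh : x = p ∧ y = j ∧ p ≤ j => hx hh.1), mul_zero]

lemma eE_of_not_le {i j : P} (h : ¬i ≤ j) : eE k P i j = 0 := by
  ext x y hxy
  rw [eE_apply, IncidenceAlgebra.zero_apply, if_neg fun hh => h hh.2.2]

lemma eE_self_apply (i : P) : eE k P i i i i = 1 := by
  rw [eE_apply, if_pos ⟨rfl, rfl, le_refl i⟩]

lemma ia_sum_apply {ι : Type*} (s : Finset ι) (g : ι → IncidenceAlgebra k P) (x y : P) :
    (∑ i ∈ s, g i) x y = ∑ i ∈ s, g i x y := by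
  induction s using Finset.cons_induction with
  | empty => rfl
  | cons i s hi ih => rw [Finset.sum_cons, Finset.sum_cons, IncidenceAlgebra.add_apply, ih]

variable [Fintype P]

lemma incidence_decomp (a : IncidenceAlgebra k P) :
    a = ∑ p : P × P, a p.1 p.2 • eE k P p.1 p.2 := by
  ext x y hxy
  rw [ia_sum_apply]
  simp only [IncidenceAlgebra.constSMul_apply, smul_eq_mul]
  rw [Finset.sum_eq_single_of_mem (x, y) (Finset.mem_univ _)]
  · rw [eE_apply, if_pos ⟨rfl, rfl, hxy⟩, mul_one]
  · intro p _ hp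
    rw [eE_apply, if_neg fun hh => hp (Prod.ext hh.1.symm hh.2.1.symm), mul_zero]

set_option maxHeartbeats 1000000 in
lemma multilin_expand {n : ℕ} {F : (Fin n → IncidenceAlgebra k P) → IncidenceAlgebra k P}
    (hF : IsMultilin k n F) (a : Fin n → IncidenceAlgebra k P) :
    F a = ∑ r ∈ Fintype.piFinset (fun _ : Fin n => (Finset.univ : Finset (P × P))),
      (∏ t, a t (r t).1 (r t).2) • F (fun t => eE k P (r t).1 (r t).2) := by
  calc F a = hF.toML (fun t => ∑ p ∈ (Finset.univ : Finset (P × P)),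
        a t p.1 p.2 • eE k P p.1 p.2) :=
        congrArg F (funext fun t => incidence_decomp (a t))
    _ = ∑ r ∈ Fintype.piFinset (fun _ : Fin n => (Finset.univ : Finset (P × P))),
        hF.toML (fun t => a t (r t).1 (r t).2 • eE k P (r t).1 (r t).2) :=
        hF.toML.map_sum_finset (fun (t : Fin n) (p : P × P) => a t p.1 p.2 • eE k P p.1 p.2)
          (fun _ => Finset.univ)
    _ = _ := by
        refine Finset.sum_congr rfl fun r _ => ?_
        exact hF.toML.map_smul_univ (fun t => a t (r t).1 (r t).2)
          (fun t => eE k P (r t).1 (r t).2)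

lemma prod_ite_chain {n : ℕ} (hn : 1 ≤ n) (c σ : Fin (n + 1) → P) (hσ : Monotone σ) :
    (∏ t : Fin n, eE k P (σ t.castSucc) (σ t.succ) (c t.castSucc) (c t.succ)) =
      if c = σ then (1 : k) else 0 := by
  by_cases h : c = σ
  · subst h
    rw [if_pos rfl]
    refine Finset.prod_eq_one fun t _ => ?_
    rw [eE_apply, if_pos ⟨rfl, rfl, hσ (Fin.castSucc_le_succ t)⟩]
  · rw [if_neg h]
    obtain ⟨j, hj⟩ := Function.ne_iff.1 h
    by_cases hjn : (j : ℕ) < n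
    · refine Finset.prod_eq_zero (Finset.mem_univ ⟨j, hjn⟩) ?_
      rw [eE_apply, if_neg]
      rintro ⟨h1, -, -⟩
      exact hj (by rwa [show (Fin.castSucc ⟨(j : ℕ), hjn⟩ : Fin (n + 1)) = j from Fin.ext rfl]
        at h1)
    · have hn1 : n - 1 < n := by omega
      refine Finset.prod_eq_zero (Finset.mem_univ ⟨n - 1, hn1⟩) ?_
      rw [eE_apply, if_neg]
      rintro ⟨-, h2, -⟩
      have e1 : (Fin.succ ⟨n - 1, hn1⟩ : Fin (n + 1)) = j := by
        ext
        have := j.isLt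
        simp only [Fin.val_succ]
        omega
      rw [e1] at h2
      exact hj h2
    
lemma Phi_corner {n : ℕ} (hn : 1 ≤ n) (f : SChain P n → k) (σ : SChain P n) :
    Phi k P n f (fun t => eE k P (σ.1 t.castSucc) (σ.1 t.succ)) (σ.1 0) (σ.1 (Fin.last n)) =
      f σ := by
  rw [Phi_apply]
  have hmem : σ.1 ∈ chainTuples P n (σ.1 0) (σ.1 (Fin.last n)) :=
    mem_chainTuples_iff.2 ⟨σ.2, rfl, rfl⟩
  rw [Finset.sum_eq_single_of_mem σ.1 hmem]
  · rw [prod_ite_chain hn σ.1 σ.1 σ.2, if_pos rfl, mul_one, fext_apply f σ.1 σ.2]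
  · intro c _ hc
    rw [prod_ite_chain hn c σ.1 σ.2, if_neg hc, mul_zero]

lemma Phi_isRelCochain (n : ℕ) (f : SChain P n → k) :
    IsRelCochain k (diagSub k P : Set (IncidenceAlgebra k P)) n (Phi k P n f) := by
  refine ⟨Phi_isMultilin n f, fun b hb a => ?_⟩
  have hb' : ∀ i j : P, i ≠ j → b i j = 0 := mem_diagSub.1 hb
  exact ⟨fun h0 => Phi_rel_left f hb' a h0,
    fun t ht => Phi_rel_mid f hb' a t ht (by omega),
    fun h0 => Phi_rel_right f hb' a h0 (by omega)⟩

/-- Support lemma: a relative cochain evaluated on a composable chain of `eE`'s is a scalar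
multiple of the corner `eE`. -/
lemma relCochain_chain_support {n : ℕ} (hn : 1 ≤ n)
    {F : (Fin n → IncidenceAlgebra k P) → IncidenceAlgebra k P}
    (hF : IsRelCochain k (diagSub k P : Set (IncidenceAlgebra k P)) n F) (σ : SChain P n) :
    F (fun t => eE k P (σ.1 t.castSucc) (σ.1 t.succ)) =
      F (fun t => eE k P (σ.1 t.castSucc) (σ.1 t.succ)) (σ.1 0) (σ.1 (Fin.last n)) •
        eE k P (σ.1 0) (σ.1 (Fin.last n)) := by
  set a : Fin n → IncidenceAlgebra k P := fun t => eE k P (σ.1 t.castSucc) (σ.1 t.succ) with ha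
  have h0 : 0 < n := hn
  have h1 : ∀ p : 0 < n, eE k P (σ.1 0) (σ.1 0) * a ⟨0, p⟩ = a ⟨0, p⟩ := by
    intro p
    have e00 : (Fin.castSucc ⟨0, p⟩ : Fin (n + 1)) = 0 := by ext; simp
    show eE k P (σ.1 0) (σ.1 0) *
        eE k P (σ.1 (Fin.castSucc ⟨0, p⟩)) (σ.1 (Fin.succ ⟨0, p⟩)) =
      eE k P (σ.1 (Fin.castSucc ⟨0, p⟩)) (σ.1 (Fin.succ ⟨0, p⟩))
    rw [e00]
    exact diag_mul_eE _ _
  have h2 : ∀ p : n - 1 < n,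
      a ⟨n - 1, p⟩ * eE k P (σ.1 (Fin.last n)) (σ.1 (Fin.last n)) = a ⟨n - 1, p⟩ := by
    intro p
    have e1 : (Fin.succ ⟨n - 1, p⟩ : Fin (n + 1)) = Fin.last n := by
      ext; simp only [Fin.val_succ, Fin.val_last]; omega
    show eE k P (σ.1 (Fin.castSucc ⟨n - 1, p⟩)) (σ.1 (Fin.succ ⟨n - 1, p⟩)) *
        eE k P (σ.1 (Fin.last n)) (σ.1 (Fin.last n)) =
      eE k P (σ.1 (Fin.castSucc ⟨n - 1, p⟩)) (σ.1 (Fin.succ ⟨n - 1, p⟩))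
    rw [e1]
    exact eE_mul_diag _ _
  have hleft : eE k P (σ.1 0) (σ.1 0) * F a = F a := by
    have key := (hF.2 (eE k P (σ.1 0) (σ.1 0)) (eE_diag_mem _) a).1 h0
    rw [h1 _, Function.update_eq_self] at key
    exact key.symm
  have hright : F a * eE k P (σ.1 (Fin.last n)) (σ.1 (Fin.last n)) = F a := by
    have key := (hF.2 (eE k P (σ.1 (Fin.last n)) (σ.1 (Fin.last n))) (eE_diag_mem _) a).2.2 h0
    rw [h2 _, Function.update_eq_self] at key
    exact key.symm
  have hsupp_l : ∀ x y : P, x ≠ σ.1 0 → F a x y = 0 := by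
    intro x y hx
    have hxy : (eE k P (σ.1 0) (σ.1 0) * F a) x y = F a x y := by rw [hleft]
    rw [diag_mul_apply (eE_diag_mem _), eE_apply, if_neg fun hh => hx hh.1, zero_mul] at hxy
    exact hxy.symm
  have hsupp_r : ∀ x y : P, y ≠ σ.1 (Fin.last n) → F a x y = 0 := by
    intro x y hy
    have hxy : (F a * eE k P (σ.1 (Fin.last n)) (σ.1 (Fin.last n))) x y = F a x y := by
      rw [hright]
    rw [mul_diag_apply (eE_diag_mem _), eE_apply, if_neg fun hh => hy hh.1, mul_zero] at hxy
    exact hxy.symm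
  ext x y hxy
  rw [constSMul_apply, smul_eq_mul, eE_apply]
  by_cases hx : x = σ.1 0
  · by_cases hy : y = σ.1 (Fin.last n)
    · subst hx; subst hy
      rw [if_pos ⟨rfl, rfl, σ.2 (Fin.zero_le _)⟩, mul_one]
    · rw [hsupp_r x y hy, if_neg fun hh => hy hh.2.1, mul_zero]
  · rw [hsupp_l x y hx, if_neg fun hh => hx hh.1, mul_zero]

/-- Mismatch lemma: a relative cochain vanishes on non-composable `eE`-tuples. -/
lemma relCochain_mismatch_zero {n : ℕ}
    {F : (Fin n → IncidenceAlgebra k P) → IncidenceAlgebra k P}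
    (hF : IsRelCochain k (diagSub k P : Set (IncidenceAlgebra k P)) n F)
    (r : Fin n → P × P) (t : ℕ) (ht : t + 1 < n)
    (hmis : (r ⟨t, by omega⟩).2 ≠ (r ⟨t + 1, ht⟩).1) :
    F (fun s => eE k P (r s).1 (r s).2) = 0 := by
  set a : Fin n → IncidenceAlgebra k P := fun s => eE k P (r s).1 (r s).2 with ha
  have h1 : ∀ p : t < n, a ⟨t, p⟩ * eE k P (r ⟨t, by omega⟩).2 (r ⟨t, by omega⟩).2
      = a ⟨t, p⟩ := fun p => eE_mul_diag _ _
  have h2 : ∀ p : t + 1 < n,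
      eE k P (r ⟨t, by omega⟩).2 (r ⟨t, by omega⟩).2 * a ⟨t + 1, p⟩ = 0 :=
    fun p => diag_mul_eE_ne hmis _
  have key := (hF.2 (eE k P (r ⟨t, by omega⟩).2 (r ⟨t, by omega⟩).2)
    (eE_diag_mem _) a).2.1 t ht
  rw [h1 _, Function.update_eq_self, h2 _] at key
  rw [key]
  exact hF.1.update_zero a ⟨t + 1, ht⟩

lemma composable_exists_chain {n : ℕ} (hn : 1 ≤ n) (r : Fin n → P × P)
    (hle : ∀ s : Fin n, (r s).1 ≤ (r s).2)
    (hadj : ∀ (t : ℕ) (ht : t + 1 < n), (r ⟨t, by omega⟩).2 = (r ⟨t + 1, ht⟩).1) :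
    ∃ σ : SChain P n, ∀ s : Fin n, r s = (σ.1 s.castSucc, σ.1 s.succ) := by
  have hn1 : n - 1 < n := by omega
  set σf : Fin (n + 1) → P := fun j =>
    if h : (j : ℕ) < n then (r ⟨j, h⟩).1 else (r ⟨n - 1, hn1⟩).2 with hσf
  have hcs : ∀ s : Fin n, σf s.castSucc = (r s).1 := by
    intro s
    simp only [hσf]
    rw [dif_pos (by simpa using s.isLt : ((s.castSucc : Fin (n + 1)) : ℕ) < n)]
    rfl
  have hsucc : ∀ s : Fin n, σf s.succ = (r s).2 := by
    intro s
    simp only [hσf]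
    by_cases h : (s : ℕ) + 1 < n
    · rw [dif_pos (by simpa using h : ((s.succ : Fin (n + 1)) : ℕ) < n)]
      have e2 : (⟨((s.succ : Fin (n + 1)) : ℕ), by simpa using h⟩ : Fin n)
          = ⟨(s : ℕ) + 1, h⟩ := Fin.ext (by simp)
      rw [e2, ← hadj s h]
    · rw [dif_neg (by simpa using h : ¬((s.succ : Fin (n + 1)) : ℕ) < n)]
      have hs : (s : ℕ) = n - 1 := by have := s.isLt; omega
      rw [show (⟨n - 1, hn1⟩ : Fin n) = s from Fin.ext (by simp [hs])]
  have hmono : Monotone σf := by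
    rw [Fin.monotone_iff_le_succ]
    intro s
    rw [hcs s, hsucc s]
    exact hle s
  exact ⟨⟨σf, hmono⟩, fun s => Prod.ext (hcs s).symm (hsucc s).symm⟩

end Aux4
section Aux5
open scoped Classical
open IncidenceAlgebra
set_option linter.unusedSectionVars false
variable {k : Type*} [Field k] {P : Type*} [PartialOrder P] [LocallyFiniteOrder P]
  [DecidableEq P]

lemma chainTuples_zero_self (x : P) :
    chainTuples P 0 x x = {fun _ => x} := by
  ext c
  rw [mem_chainTuples_iff, Finset.mem_singleton]
  constructor
  · rintro ⟨-, h0, -⟩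
    funext i
    exact (show i = 0 from Fin.ext (by omega)) ▸ h0
  · rintro rfl
    exact ⟨monotone_const, rfl, rfl⟩

lemma chainTuples_zero_ne {x y : P} (h : x ≠ y) : chainTuples P 0 x y = ∅ := by
  refine Finset.eq_empty_iff_forall_notMem.2 fun c hc => ?_
  obtain ⟨-, h0, hl⟩ := mem_chainTuples_iff.1 hc
  apply h
  rw [← h0, ← hl]
  exact congrArg c (Fin.ext (by simp) : (0 : Fin (0 + 1)) = Fin.last 0)

lemma Phi_zero_apply (f : SChain P 0 → k) (a : Fin 0 → IncidenceAlgebra k P) (x y : P) :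
    Phi k P 0 f a x y = if x = y then f ⟨fun _ => x, monotone_const⟩ else 0 := by
  rw [Phi_apply]
  by_cases h : x = y
  · subst h
    rw [chainTuples_zero_self, Finset.sum_singleton, if_pos rfl,
      fext_apply f _ monotone_const, Finset.univ_eq_empty, Finset.prod_empty, mul_one]
  · rw [chainTuples_zero_ne h, Finset.sum_empty, if_neg h]

end Aux5

theorem phi_linear_bijection
    (k : Type*) [Field k] [CharZero k]
    (P : Type*) [PartialOrder P] [Fintype P] [LocallyFiniteOrder P] [DecidableEq P] :
    -- `Φ` in positive degrees: a `k`-linear bijection onto the relative cochains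
    (∀ n : ℕ, 1 ≤ n →
      (∀ f : SChain P n → k,
        IsRelCochain k (diagSub k P : Set (IncidenceAlgebra k P)) n (Phi k P n f)) ∧
      (∀ (c : k) (f g : SChain P n → k),
        Phi k P n (c • f + g) = fun a => c • Phi k P n f a + Phi k P n g a) ∧
      Function.Injective (Phi k P n) ∧
      (∀ F : (Fin n → IncidenceAlgebra k P) → IncidenceAlgebra k P,
        IsRelCochain k (diagSub k P : Set (IncidenceAlgebra k P)) n F →
          ∃ f : SChain P n → k, Phi k P n f = F)) ∧
    -- `Φ` in degree 0: a `k`-linear bijection onto the centralizer of `S`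
    ((∀ f : SChain P 0 → k, ∀ b ∈ diagSub k P,
        Phi k P 0 f Fin.elim0 * b = b * Phi k P 0 f Fin.elim0) ∧
      (∀ (c : k) (f g : SChain P 0 → k),
        Phi k P 0 (c • f + g) Fin.elim0 =
          c • Phi k P 0 f Fin.elim0 + Phi k P 0 g Fin.elim0) ∧
      Function.Injective (fun f : SChain P 0 → k => Phi k P 0 f Fin.elim0) ∧
      (∀ a : IncidenceAlgebra k P, (∀ b ∈ diagSub k P, a * b = b * a) →
        ∃ f : SChain P 0 → k, Phi k P 0 f Fin.elim0 = a)) := by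
  constructor
  · intro n hn
    refine ⟨Phi_isRelCochain n, ?_, ?_, ?_⟩
    · -- linearity
      intro c f g
      funext a
      ext x y hxy
      rw [IncidenceAlgebra.add_apply, constSMul_apply, smul_eq_mul, Phi_apply, Phi_apply, Phi_apply,
        Finset.mul_sum, ← Finset.sum_add_distrib]
      refine Finset.sum_congr rfl fun d hd => ?_
      have hm := chainTuples_mono P hd
      rw [fext_apply _ _ hm, fext_apply _ _ hm, fext_apply _ _ hm,
        Pi.add_apply, Pi.smul_apply, smul_eq_mul]
      ring
    · -- injectivity
      intro f g h
      funext σ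
      rw [← Phi_corner hn f σ, ← Phi_corner hn g σ, h]
    · -- surjectivity
      intro F hF
      refine ⟨fun σ => F (fun t => eE k P (σ.1 t.castSucc) (σ.1 t.succ)) (σ.1 0)
        (σ.1 (Fin.last n)), ?_⟩
      funext a
      rw [multilin_expand (Phi_isRelCochain n _).1 a, multilin_expand hF.1 a]
      refine Finset.sum_congr rfl fun r _ => ?_
      congr 1
      by_cases hle : ∀ s : Fin n, (r s).1 ≤ (r s).2
      · by_cases hadj : ∀ (t : ℕ) (ht : t + 1 < n), (r ⟨t, by omega⟩).2 = (r ⟨t + 1, ht⟩).1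
        · obtain ⟨σ, hσ⟩ := composable_exists_chain hn r hle hadj
          have hre : (fun t => eE k P (r t).1 (r t).2) =
              fun t => eE k P (σ.1 t.castSucc) (σ.1 t.succ) := by
            funext t
            rw [hσ t]
          rw [hre, relCochain_chain_support hn (Phi_isRelCochain n _) σ,
            relCochain_chain_support hn hF σ, Phi_corner hn _ σ]
        · push_neg at hadj
          obtain ⟨t, ht, hmis⟩ := hadj
          rw [relCochain_mismatch_zero (Phi_isRelCochain n _) r t ht hmis,
            relCochain_mismatch_zero hF r t ht hmis]
      · push_neg at hle
        obtain ⟨s, hs⟩ := hle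
        have hz : eE k P (r s).1 (r s).2 = 0 := eE_of_not_le hs
        rw [(Phi_isRelCochain n _).1.coord_zero s hz, hF.1.coord_zero s hz]
  · refine ⟨?_, ?_, ?_, ?_⟩
    · -- commutes with diagonal
      intro f b hb
      have hb' := mem_diagSub.1 hb
      ext x y hxy
      rw [mul_diag_apply hb', diag_mul_apply hb', Phi_zero_apply]
      by_cases h : x = y
      · subst h
        rw [if_pos rfl]
        exact mul_comm _ _
      · rw [if_neg h, zero_mul, mul_zero]
    · -- linearity
      intro c f g
      ext x y hxy
      rw [IncidenceAlgebra.add_apply, constSMul_apply, smul_eq_mul, Phi_zero_apply, Phi_zero_apply,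
        Phi_zero_apply]
      by_cases h : x = y
      · rw [if_pos h, if_pos h, if_pos h, Pi.add_apply, Pi.smul_apply, smul_eq_mul]
      · rw [if_neg h, if_neg h, if_neg h, mul_zero, add_zero]
    · -- injectivity
      intro f g h
      funext σ
      have hσ : σ = ⟨fun _ => σ.1 0, monotone_const⟩ :=
        Subtype.ext (funext fun i => congrArg σ.1 (Fin.ext (by omega) : i = 0))
      have h' : Phi k P 0 f Fin.elim0 = Phi k P 0 g Fin.elim0 := h
      have h2 : Phi k P 0 f Fin.elim0 (σ.1 0) (σ.1 0) =
          Phi k P 0 g Fin.elim0 (σ.1 0) (σ.1 0) := by rw [h']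
      rw [Phi_zero_apply, Phi_zero_apply, if_pos rfl, if_pos rfl] at h2
      rw [hσ]
      exact h2
    · -- surjectivity onto centralizer
      intro a ha
      have hdiag : ∀ i j : P, i ≠ j → a i j = 0 := by
        intro i j hij
        have h2 : (a * eE k P j j) i j = (eE k P j j * a) i j := by
          rw [ha (eE k P j j) (eE_diag_mem j)]
        rw [mul_diag_apply (mem_diagSub.1 (eE_diag_mem j)) a, eE_self_apply, mul_one,
          diag_mul_apply (mem_diagSub.1 (eE_diag_mem j)) a, eE_apply,
          if_neg (fun hh : i = j ∧ i = j ∧ j ≤ j => hij hh.1), zero_mul] at h2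
        exact h2
      refine ⟨fun σ => a (σ.1 0) (σ.1 0), ?_⟩
      ext x y hxy
      rw [Phi_zero_apply]
      by_cases h : x = y
      · subst h
        rw [if_pos rfl]
      · rw [if_neg h]
        exact (hdiag x y h).symm
end

section
/- Let P be a locally finite poset and k a field of characteristic 0. Let ω be a W-valued 2-cochain on P, and let F_ω be the k[[λ]]-bilinear map on the incidence algebra of P over k[[λ]] defined by F_ω(a,b)(i,k') = Σ_{i ≤ j ≤ k'} ω(i,j,k')·a(i,j)·b(j,k'). Then F_ω is associative if and only if ω is a 2-cocycle, i.e., ω(j,k',l)·ω(i,j,l) = ω(i,k',l)·ω(i,j,k') for all chains i ≤ j ≤ k' ≤ l in P. -/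
/-!
STATEMENT 12: For a `W`-valued 2-cochain `ω` on `P`, the `k[[λ]]`-bilinear map
`F_ω(a,b)(i,k') = ∑_{i ≤ j ≤ k'} ω(i,j,k')·a(i,j)·b(j,k')` on the incidence algebra of
`P` over `k[[λ]]` is associative if and only if `ω` is a 2-cocycle.
-/

open Finset PowerSeries

/-- The deformed product `F_ω` on the incidence algebra over a commutative ring `R`:
`F_ω(a,b)(i,k') = ∑_{i ≤ j ≤ k'} ω(i,j,k')·a(i,j)·b(j,k')`. -/
def Fdef {R : Type*} [CommRing R] {P : Type*} [PartialOrder P] [LocallyFiniteOrder P]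
    (ω : P → P → P → R) (a b : IncidenceAlgebra R P) : IncidenceAlgebra R P :=
  ⟨fun i l => ∑ j ∈ Finset.Icc i l, ω i j l * a i j * b j l,
   fun i l h => by
    try dsimp only
    rw [Finset.Icc_eq_empty h, Finset.sum_empty]⟩

@[simp] lemma Fdef_apply {R : Type*} [CommRing R] {P : Type*} [PartialOrder P]
    [LocallyFiniteOrder P] (ω : P → P → P → R) (a b : IncidenceAlgebra R P) (i l : P) :
    Fdef ω a b i l = ∑ j ∈ Finset.Icc i l, ω i j l * a i j * b j l := rfl

/-- The "matrix unit" `E^{ij}` of the incidence algebra. -/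
def Esing {R : Type*} [CommRing R] [DecidableEq R] {P : Type*} [PartialOrder P]
    [DecidableEq P] (i j : P) (hij : i ≤ j) : IncidenceAlgebra R P :=
  ⟨fun a b => if a = i ∧ b = j then 1 else 0,
   fun a b h => by
    rw [if_neg]
    rintro ⟨rfl, rfl⟩
    exact h hij⟩

@[simp] lemma Esing_apply {R : Type*} [CommRing R] [DecidableEq R] {P : Type*} [PartialOrder P]
    [DecidableEq P] (i j : P) (hij : i ≤ j) (a b : P) :
    (Esing (R := R) i j hij) a b = if a = i ∧ b = j then 1 else 0 := rfl

theorem Fdef_assoc_iff_cocycle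
    (k : Type*) [Field k] [CharZero k]
    (P : Type*) [PartialOrder P] [LocallyFiniteOrder P]
    (ω : P → P → P → PowerSeries k)
    (hω : ∀ i j l : P, i ≤ j → j ≤ l → constantCoeff (ω i j l) = 1) :
    (∀ a b c : IncidenceAlgebra (PowerSeries k) P,
        Fdef ω (Fdef ω a b) c = Fdef ω a (Fdef ω b c)) ↔
      (∀ i j k' l : P, i ≤ j → j ≤ k' → k' ≤ l →
        ω j k' l * ω i j l = ω i k' l * ω i j k') := by
  classical
  constructor
  · intro H i j k' l hij hjk hkl
    have h := DFunLike.congr_fun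
      (H (Esing i j hij) (Esing j k' hjk) (Esing k' l hkl)) i
    have h2 := congrFun h l
    simp only [Fdef_apply] at h2
    rw [Finset.sum_eq_single_of_mem k' (Finset.mem_Icc.2 ⟨hij.trans hjk, hkl⟩)
        (fun x hx hxk => by simp [Esing_apply, hxk])] at h2
    rw [Finset.sum_eq_single_of_mem j (Finset.mem_Icc.2 ⟨hij, hjk⟩)
        (fun y hy hyj => by simp [Esing_apply, hyj])] at h2
    rw [Finset.sum_eq_single_of_mem j (Finset.mem_Icc.2 ⟨hij, hjk.trans hkl⟩)
        (fun x hx hxj => by simp [Esing_apply, hxj])] at h2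
    rw [Finset.sum_eq_single_of_mem k' (Finset.mem_Icc.2 ⟨hjk, hkl⟩)
        (fun y hy hyk => by simp [Esing_apply, hyk])] at h2
    simp only [Esing_apply, and_self, if_true, if_pos, mul_one, one_mul] at h2
    rw [h2]; ring
  · intro H a b c
    refine IncidenceAlgebra.ext fun i l hil => ?_
    simp only [Fdef_apply, Finset.sum_mul, Finset.mul_sum]
    rw [Finset.sum_sigma', Finset.sum_sigma']
    refine Finset.sum_nbij' (fun p => ⟨p.2, p.1⟩) (fun p => ⟨p.2, p.1⟩) ?_ ?_ ?_ ?_ ?_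
    · rintro ⟨x, y⟩ hp
      simp only [Finset.mem_sigma, Finset.mem_Icc] at hp ⊢
      exact ⟨⟨hp.2.1, hp.2.2.trans hp.1.2⟩, hp.2.2, hp.1.2⟩
    · rintro ⟨x, y⟩ hp
      simp only [Finset.mem_sigma, Finset.mem_Icc] at hp ⊢
      exact ⟨⟨hp.1.1.trans hp.2.1, hp.2.2⟩, hp.1.1, hp.2.1⟩
    · rintro ⟨x, y⟩ _; rfl
    · rintro ⟨x, y⟩ _; rfl
    · rintro ⟨x, y⟩ hp
      simp only [Finset.mem_sigma, Finset.mem_Icc] at hp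
      have hc := H i y x l hp.2.1 hp.2.2 hp.1.2
      linear_combination (-(a i y * b y x * c x l)) * hc
end

section
/- Let P be a locally finite poset and k a field of characteristic 0. Let ω and ω' be W-valued 2-cochains on P, let φ be a W-valued 1-cochain on P (assigning φ(i,j) ∈ W to each i ≤ j), and let f_φ be the k[[λ]]-linear bijection of the incidence algebra of P over k[[λ]] given by f_φ(a)(i,j) = φ(i,j)·a(i,j). Then f_φ(F_{ω'}(a,b)) = F_ω(f_φ(a), f_φ(b)) for all a, b if and only if ω'(i,j,k')·φ(i,k') = ω(i,j,k')·φ(i,j)·φ(j,k') for all chains i ≤ j ≤ k', i.e., if and only if ω' = (dφ)·ω. In particular, cohomologous W-valued 2-cocycles ω and ω' yield equivalent deformations F_ω and F_{ω'}. -/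
/-!
STATEMENT 13: For `W`-valued 2-cochains `ω, ω'` and a `W`-valued 1-cochain `φ`, the
`k[[λ]]`-linear bijection `f_φ(a)(i,j) = φ(i,j)·a(i,j)` intertwines `F_{ω'}` and `F_ω`
if and only if `ω'(i,j,k')·φ(i,k') = ω(i,j,k')·φ(i,j)·φ(j,k')` for all chains
`i ≤ j ≤ k'` (i.e. `ω' = (dφ)·ω`). In particular, cohomologous `W`-valued 2-cocycles
yield equivalent deformations.
-/

open Finset PowerSeries

/-- The rescaling map `f_φ(a)(i,j) = φ(i,j)·a(i,j)` of the incidence algebra. -/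
def fRescale {R : Type*} [CommRing R] {P : Type*} [PartialOrder P]
    (φ : P → P → R) (a : IncidenceAlgebra R P) : IncidenceAlgebra R P :=
  ⟨fun i j => φ i j * a i j,
   fun i j h => by
    try dsimp only
    rw [IncidenceAlgebra.apply_eq_zero_of_not_le h, mul_zero]⟩

open scoped Classical in
/-- A delta element of the incidence algebra supported at a single pair `(i, j)`. -/
noncomputable def deltaIA {R : Type*} [CommRing R] {P : Type*} [PartialOrder P]
    (i j : P) (hij : i ≤ j) : IncidenceAlgebra R P :=
  ⟨fun x y => if x = i ∧ y = j then 1 else 0,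
   fun x y h => by
    split
    · next hx => exact absurd (hx.1 ▸ hx.2 ▸ hij) h
    · rfl⟩

@[simp] lemma fRescale_apply {R : Type*} [CommRing R] {P : Type*} [PartialOrder P]
    (φ : P → P → R) (a : IncidenceAlgebra R P) (i j : P) :
    fRescale φ a i j = φ i j * a i j := rfl

open scoped Classical in
@[simp] lemma deltaIA_apply {R : Type*} [CommRing R] {P : Type*} [PartialOrder P]
    (i j : P) (hij : i ≤ j) (x y : P) :
    deltaIA (R := R) i j hij x y = if x = i ∧ y = j then 1 else 0 := rfl

theorem rescale_intertwines_iff_coboundary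
    (k : Type*) [Field k] [CharZero k]
    (P : Type*) [PartialOrder P] [LocallyFiniteOrder P]
    (ω ω' : P → P → P → PowerSeries k)
    (hω : ∀ i j l : P, i ≤ j → j ≤ l → constantCoeff (R := k) (ω i j l) = 1)
    (hω' : ∀ i j l : P, i ≤ j → j ≤ l → constantCoeff (R := k) (ω' i j l) = 1)
    (φ : P → P → PowerSeries k)
    (hφ : ∀ i j : P, i ≤ j → constantCoeff (R := k) (φ i j) = 1) :
    -- main equivalence: `f_φ ∘ F_{ω'} = F_ω ∘ (f_φ × f_φ)` iff `ω' = (dφ)·ω`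
    ((∀ a b : IncidenceAlgebra (PowerSeries k) P,
        fRescale φ (Fdef ω' a b) = Fdef ω (fRescale φ a) (fRescale φ b)) ↔
      (∀ i j k' : P, i ≤ j → j ≤ k' →
        ω' i j k' * φ i k' = ω i j k' * φ i j * φ j k')) ∧
    -- in particular: cohomologous cocycles yield equivalent deformations
    ((∀ i j k' : P, i ≤ j → j ≤ k' →
        ω' i j k' * φ i k' = ω i j k' * φ i j * φ j k') →
      ∃ f : IncidenceAlgebra (PowerSeries k) P → IncidenceAlgebra (PowerSeries k) P,
        Function.Bijective f ∧
        (∀ (r : PowerSeries k) (a a' : IncidenceAlgebra (PowerSeries k) P),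
          f (r • a + a') = r • f a + f a') ∧
        (∀ (a : IncidenceAlgebra (PowerSeries k) P) (i j : P),
          constantCoeff (R := k) (f a i j) = constantCoeff (R := k) (a i j)) ∧
        (∀ a b : IncidenceAlgebra (PowerSeries k) P,
          f (Fdef ω' a b) = Fdef ω (f a) (f b))) := by
  have hunit : ∀ i j : P, i ≤ j → IsUnit (φ i j) := by
    intro i j hij
    rw [PowerSeries.isUnit_iff_constantCoeff, hφ i j hij]
    exact isUnit_one
  have key : (∀ a b : IncidenceAlgebra (PowerSeries k) P,
        fRescale φ (Fdef ω' a b) = Fdef ω (fRescale φ a) (fRescale φ b)) ↔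
      (∀ i j k' : P, i ≤ j → j ≤ k' →
        ω' i j k' * φ i k' = ω i j k' * φ i j * φ j k') := by
    constructor
    · intro H i j l hij hjl
      have := congrArg (fun c => c i l) (H (deltaIA i j hij) (deltaIA j l hjl))
      simp only [fRescale_apply, Fdef_apply, deltaIA_apply, Finset.mul_sum] at this
      rw [Finset.sum_eq_single j, Finset.sum_eq_single j] at this
      · simp only [and_self, if_true, mul_one] at this
        rw [mul_comm (ω' i j l)]
        exact this
      · intro b _ hb
        simp [hb]
      · intro hj
        exact absurd (Finset.mem_Icc.mpr ⟨hij, hjl⟩) hj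
      · intro b _ hb
        simp [hb]
      · intro hj
        exact absurd (Finset.mem_Icc.mpr ⟨hij, hjl⟩) hj
    · intro H a b
      refine IncidenceAlgebra.ext fun i l hil => ?_
      simp only [fRescale_apply, Fdef_apply, Finset.mul_sum]
      refine Finset.sum_congr rfl fun j hj => ?_
      obtain ⟨hij, hjl⟩ := Finset.mem_Icc.mp hj
      calc φ i l * (ω' i j l * a i j * b j l)
          = (ω' i j l * φ i l) * a i j * b j l := by ring
        _ = (ω i j l * φ i j * φ j l) * a i j * b j l := by rw [H i j l hij hjl]
        _ = ω i j l * (φ i j * a i j) * (φ j l * b j l) := by ring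
  refine ⟨key, fun H => ⟨fRescale φ, ?_, ?_, ?_, key.mpr H⟩⟩
  · -- bijectivity via explicit inverse
    have hinv : Function.LeftInverse
        (fRescale (fun i j => Ring.inverse (φ i j))) (fRescale φ) ∧
        Function.RightInverse
        (fRescale (fun i j => Ring.inverse (φ i j))) (fRescale φ) := by
      constructor
      · intro a
        refine IncidenceAlgebra.ext fun i j hij => ?_
        simp only [fRescale_apply, ← mul_assoc]
        rw [Ring.inverse_mul_cancel _ (hunit i j hij), one_mul]
      · intro a
        refine IncidenceAlgebra.ext fun i j hij => ?_
        simp only [fRescale_apply, ← mul_assoc]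
        rw [Ring.mul_inverse_cancel _ (hunit i j hij), one_mul]
    exact ⟨hinv.1.injective, hinv.2.surjective⟩
  · intro r a a'
    refine IncidenceAlgebra.ext fun i j _ => ?_
    simp only [fRescale_apply, IncidenceAlgebra.add_apply, IncidenceAlgebra.constSMul_apply,
      smul_eq_mul]
    ring
  · intro a i j
    by_cases hij : i ≤ j
    · simp [fRescale_apply, map_mul, hφ i j hij]
    · simp [IncidenceAlgebra.apply_eq_zero_of_not_le hij]
end
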